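/- Let {M₁, M₂} be a two-outcome POVM in dimension 2 with Matrix.trace M₁ ≤ Matrix.trace M₂. Then for every unit vector φ ∈ ℂ², there exists a valid decomposition K of {M₁,M₂} whose objective at φ satisfies ∑_j ⟪φ, (K j j)·φ⟫ ≥ 1 − tr M₁ + (1/2)·(tr √M₁)². (Hence P_guess(φ, {M₁,M₂}) ≥ 1 − tr M₁ + (1/2)·(tr √M₁)² for every unit φ.) -/

import Mathlib

open Matrix ComplexOrder

noncomputable section

/-- The positive semidefinite square root, as `Matrix.PosSemidef.sqrt` was defined in Mathlib
(December 2024); removed from Mathlib since. -/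
def Matrix.PosSemidef.sqrt {n 𝕜 : Type*} [Fintype n] [DecidableEq n] [RCLike 𝕜]
    {A : Matrix n n 𝕜} (hA : A.PosSemidef) : Matrix n n 𝕜 :=
  (hA.1.eigenvectorUnitary : Matrix n n 𝕜) *
    diagonal (fun i => ((Real.sqrt (hA.1.eigenvalues i) : ℝ) : 𝕜)) *
    (star hA.1.eigenvectorUnitary : Matrix n n 𝕜)

/-- `K` is a valid decomposition of the POVM `M`. -/
def IsDecomp {m d : ℕ} (M : Fin m → Matrix (Fin d) (Fin d) ℂ)
    (K : Fin m → Fin m → Matrix (Fin d) (Fin d) ℂ) : Prop :=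
  (∀ x j, (K x j).PosSemidef) ∧
  (∀ j, (d : ℂ) • ∑ x, K x j = (∑ x, (K x j).trace) • (1 : Matrix (Fin d) (Fin d) ℂ)) ∧
  (∀ x, ∑ j, K x j = M x)

/-- Eve's objective for the decomposition `K` and the state `φ`:
`∑_j ⟪φ, (K j j) φ⟫`. -/
def objective {m d : ℕ} (K : Fin m → Fin m → Matrix (Fin d) (Fin d) ℂ)
    (φ : Fin d → ℂ) : ℝ :=
  ∑ j, (star φ ⬝ᵥ (K j j).mulVec φ).re

private lemma psd_sqrt_psd {n : ℕ} {A : Matrix (Fin n) (Fin n) ℂ} (hA : A.PosSemidef) :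
    hA.sqrt.PosSemidef := by
  unfold Matrix.PosSemidef.sqrt
  have hD : (diagonal (fun i => ((Real.sqrt (hA.1.eigenvalues i) : ℝ) : ℂ))).PosSemidef :=
    PosSemidef.diagonal fun i => Complex.zero_le_real.mpr (Real.sqrt_nonneg _)
  have := hD.mul_mul_conjTranspose_same (hA.1.eigenvectorUnitary : Matrix (Fin n) (Fin n) ℂ)
  simpa [star_eq_conjTranspose] using this

private lemma psd_sqrt_mul_self {n : ℕ} {A : Matrix (Fin n) (Fin n) ℂ} (hA : A.PosSemidef) :
    hA.sqrt * hA.sqrt = A := by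
  unfold Matrix.PosSemidef.sqrt
  set U : Matrix (Fin n) (Fin n) ℂ := (hA.1.eigenvectorUnitary).val
  have hU : star U * U = 1 := Unitary.star_mul_self_of_mem hA.1.eigenvectorUnitary.2
  have hs := hA.1.spectral_theorem
  rw [Unitary.conjStarAlgAut_apply] at hs
  calc U * diagonal (fun i => ((Real.sqrt (hA.1.eigenvalues i) : ℝ) : ℂ)) * star U *
        (U * diagonal (fun i => ((Real.sqrt (hA.1.eigenvalues i) : ℝ) : ℂ)) * star U)
      = U * (diagonal (fun i => ((Real.sqrt (hA.1.eigenvalues i) : ℝ) : ℂ)) * (star U * U) *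
        diagonal (fun i => ((Real.sqrt (hA.1.eigenvalues i) : ℝ) : ℂ))) * star U := by
          simp only [Matrix.mul_assoc]
    _ = A := by
      rw [hU, Matrix.mul_one, diagonal_mul_diagonal]
      conv_rhs => rw [hs]
      congr 3
      funext i
      simp only [Function.comp_apply]
      rw [← Complex.ofReal_mul, Real.mul_self_sqrt (hA.eigenvalues_nonneg i)]
      rfl

private lemma vmv_mulVec {n : ℕ} (a b u : Fin n → ℂ) :
    (vecMulVec a b) *ᵥ u = (b ⬝ᵥ u) • a := by
  ext i
  simp only [mulVec, vecMulVec_apply, dotProduct, Pi.smul_apply, smul_eq_mul, Finset.sum_mul]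
  exact Finset.sum_congr rfl fun j _ => by ring

private lemma vmv_trace {n : ℕ} (a b : Fin n → ℂ) :
    (vecMulVec a b).trace = b ⬝ᵥ a := by
  simp [trace, vecMulVec_apply, dotProduct, diag, mul_comm]

private lemma mul_vmv {n : ℕ} (A : Matrix (Fin n) (Fin n) ℂ) (a b : Fin n → ℂ) :
    A * vecMulVec a b = vecMulVec (A *ᵥ a) b := by
  ext i j
  simp only [mul_apply, vecMulVec_apply, mulVec, dotProduct, Finset.sum_mul]
  exact Finset.sum_congr rfl fun k _ => by ring

private lemma vmv_mul {n : ℕ} (A : Matrix (Fin n) (Fin n) ℂ) (a b : Fin n → ℂ) :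
    vecMulVec a b * A = vecMulVec a (b ᵥ* A) := by
  ext i j
  simp only [mul_apply, vecMulVec_apply, vecMul, dotProduct, Finset.mul_sum]
  exact Finset.sum_congr rfl fun k _ => by ring

private lemma outer_psd {n : ℕ} (v : Fin n → ℂ) : (vecMulVec v (star v)).PosSemidef := by
  refine posSemidef_iff_dotProduct_mulVec.mpr ⟨?_, ?_⟩
  · ext i j
    simp [conjTranspose_apply, vecMulVec_apply, star_mul', mul_comm]
  · intro x
    rw [vmv_mulVec, dotProduct_smul, smul_eq_mul, star_dotProduct]
    exact star_mul_self_nonneg _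

private lemma dot_self_nonneg {n : ℕ} (u : Fin n → ℂ) : 0 ≤ star u ⬝ᵥ u :=
  Finset.sum_nonneg fun i _ => star_mul_self_nonneg (u i)

private lemma cs {n : ℕ} (u v : Fin n → ℂ) :
    (star u ⬝ᵥ v) * (star v ⬝ᵥ u) ≤ (star u ⬝ᵥ u) * (star v ⬝ᵥ v) := by
  set U : EuclideanSpace ℂ (Fin n) := WithLp.toLp 2 u
  set V : EuclideanSpace ℂ (Fin n) := WithLp.toLp 2 v
  have h1 : star u ⬝ᵥ v = inner ℂ U V := by rw [EuclideanSpace.inner_toLp_toLp, dotProduct_comm]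
  have h2 : star v ⬝ᵥ u = inner ℂ V U := by rw [EuclideanSpace.inner_toLp_toLp, dotProduct_comm]
  have h3 : star u ⬝ᵥ u = inner ℂ U U := by rw [EuclideanSpace.inner_toLp_toLp, dotProduct_comm]
  have h4 : star v ⬝ᵥ v = inner ℂ V V := by rw [EuclideanSpace.inner_toLp_toLp, dotProduct_comm]
  rw [h1, h2, h3, h4]
  have hVU : (inner ℂ V U : ℂ) = starRingEnd ℂ (inner ℂ U V) := (inner_conj_symm V U).symm
  rw [hVU, Complex.mul_conj, inner_self_eq_norm_sq_to_K, inner_self_eq_norm_sq_to_K]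
  have hle : ‖(inner ℂ U V : ℂ)‖ ≤ ‖U‖ * ‖V‖ := norm_inner_le_norm U V
  have : Complex.normSq (inner ℂ U V : ℂ) ≤ (‖U‖ * ‖V‖) ^ 2 := by
    rw [Complex.normSq_eq_norm_sq]
    have h0 : (0:ℝ) ≤ ‖(inner ℂ U V : ℂ)‖ := norm_nonneg _
    nlinarith
  calc (Complex.normSq (inner ℂ U V : ℂ) : ℂ) ≤ (((‖U‖ * ‖V‖) ^ 2 : ℝ) : ℂ) := by
        exact_mod_cast Complex.real_le_real.mpr this
    _ = (‖U‖ : ℂ) ^ 2 * (‖V‖ : ℂ) ^ 2 := by push_cast; ring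

theorem pguess_qubit_two_outcome_lower_bound
    (M : Fin 2 → Matrix (Fin 2) (Fin 2) ℂ)
    (hpsd : ∀ x, (M x).PosSemidef) (hsum : ∑ x, M x = 1)
    (htr : (M 0).trace.re ≤ (M 1).trace.re)
    (φ : Fin 2 → ℂ) (hφ : star φ ⬝ᵥ φ = 1) :
    ∃ K : Fin 2 → Fin 2 → Matrix (Fin 2) (Fin 2) ℂ, IsDecomp M K ∧
      1 - (M 0).trace.re + (1 / 2) * ((hpsd 0).sqrt.trace.re) ^ 2 ≤ objective K φ := by
  set A : Matrix (Fin 2) (Fin 2) ℂ := (hpsd 0).sqrt with hAdef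
  have hA : A.PosSemidef := psd_sqrt_psd (hpsd 0)
  have hAH : Aᴴ = A := hA.1
  have hAA : A * A = M 0 := psd_sqrt_mul_self (hpsd 0)
  set ψ : Fin 2 → ℂ := ![-(starRingEnd ℂ (φ 1)), starRingEnd ℂ (φ 0)] with hψdef
  have hφ2 : (starRingEnd ℂ) (φ 0) * φ 0 + (starRingEnd ℂ) (φ 1) * φ 1 = 1 := by
    simpa [dotProduct, Fin.sum_univ_two] using hφ
  have hres : vecMulVec φ (star φ) + vecMulVec ψ (star ψ) = 1 := by
    ext i j
    fin_cases i <;> fin_cases j <;>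
      simp [-cons_vecMulVec, Matrix.add_apply, vecMulVec_apply, hψdef, Matrix.one_apply, Pi.star_apply] <;>
      first
      | ring1
      | linear_combination hφ2
  set w : Fin 2 → ℂ := A *ᵥ φ with hw
  set w' : Fin 2 → ℂ := A *ᵥ ψ with hw'
  have hsym : ∀ a b : Fin 2 → ℂ, star a ⬝ᵥ (A *ᵥ b) = star (star b ⬝ᵥ (A *ᵥ a)) := fun a b => by
    rw [dotProduct_mulVec]
    conv_lhs => rw [← hAH, ← star_mulVec]
    exact star_dotProduct _ _
  have houter : ∀ v : Fin 2 → ℂ,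
      vecMulVec (A *ᵥ v) (star (A *ᵥ v)) = A * vecMulVec v (star v) * A := fun v => by
    rw [star_mulVec, hAH, mul_vmv, vmv_mul]
  have hMsum : vecMulVec w (star w) + vecMulVec w' (star w') = M 0 := by
    rw [hw, hw', houter, houter, ← add_mul, ← mul_add, hres, mul_one, hAA]
  set z : ℂ := star φ ⬝ᵥ w with hz
  set z' : ℂ := star ψ ⬝ᵥ w' with hz'
  set x : ℂ := star φ ⬝ᵥ w' with hx
  have hψw : star ψ ⬝ᵥ w = star x := by rw [hx, hw, hw']; exact hsym ψ φ
  have hzs : star z = z := by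
    rw [hz, hw]; conv_rhs => rw [hsym φ φ]
  have hz's : star z' = z' := by
    rw [hz', hw']; conv_rhs => rw [hsym ψ ψ]
  have hdot : ∀ v : Fin 2 → ℂ, star v ⬝ᵥ v =
      (star φ ⬝ᵥ v) * star (star φ ⬝ᵥ v) + (star ψ ⬝ᵥ v) * star (star ψ ⬝ᵥ v) := by
    intro v
    have h := congrArg (fun X : Matrix (Fin 2) (Fin 2) ℂ => star v ⬝ᵥ X *ᵥ v) hres
    simp only [add_mulVec, dotProduct_add, vmv_mulVec, dotProduct_smul, smul_eq_mul,
      one_mulVec] at h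
    rw [← h, star_dotProduct v φ, star_dotProduct v ψ]
  set sw : ℂ := star w ⬝ᵥ w with hswdef
  set sw' : ℂ := star w' ⬝ᵥ w' with hsw'def
  have hsw : sw = z * star z + x * star x := by
    rw [hswdef, hdot w, ← hz, hψw, star_star]; ring
  have hsw' : sw' = x * star x + z' * star z' := by
    rw [hsw'def, hdot w', ← hx, ← hz']
  have hsws : star sw = sw := by rw [hsw]; simp only [star_add, star_mul', star_star]; ring
  have hswsum : sw + sw' = (M 0).trace := by
    rw [← hMsum, trace_add, vmv_trace, vmv_trace, ← hswdef, ← hsw'def]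
  have htrA : A.trace = z + z' := by
    have hA1 : A = vecMulVec w (star φ) + vecMulVec w' (star ψ) := by
      conv_lhs => rw [← mul_one A, ← hres, mul_add, mul_vmv, mul_vmv, ← hw, ← hw']
    rw [hA1, trace_add, vmv_trace, vmv_trace, ← hz, ← hz']
  -- real bookkeeping
  set sR : ℝ := z.re with hsR
  set s'R : ℝ := z'.re with hs'R
  set nx : ℝ := Complex.normSq x with hnx
  have hzim : z.im = 0 := Complex.conj_eq_iff_im.mp hzs
  have hz'im : z'.im = 0 := Complex.conj_eq_iff_im.mp hz's
  have hzz : z * star z = ((sR ^ 2 : ℝ) : ℂ) := by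
    rw [Complex.star_def, Complex.mul_conj]
    norm_cast
    simp [Complex.normSq_apply, hzim, ← hsR, sq]
  have hz'z' : z' * star z' = ((s'R ^ 2 : ℝ) : ℂ) := by
    rw [Complex.star_def, Complex.mul_conj]
    norm_cast
    simp [Complex.normSq_apply, hz'im, ← hs'R, sq]
  have hxx : x * star x = ((nx : ℝ) : ℂ) := by
    rw [Complex.star_def, Complex.mul_conj, hnx]
  have hswre : sw = ((sR ^ 2 + nx : ℝ) : ℂ) := by rw [hsw, hzz, hxx]; push_cast; ring
  have hsw're : sw' = ((nx + s'R ^ 2 : ℝ) : ℂ) := by rw [hsw', hz'z', hxx]; push_cast; ring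
  have htrM0 : (M 0).trace = ((sR ^ 2 + s'R ^ 2 + 2 * nx : ℝ) : ℂ) := by
    rw [← hswsum, hswre, hsw're]; push_cast; ring
  have htrM0re : (M 0).trace.re = sR ^ 2 + s'R ^ 2 + 2 * nx := by
    rw [htrM0]; exact Complex.ofReal_re _
  have htrAre : A.trace.re = sR + s'R := by
    rw [htrA]; simp [hsR, hs'R]
  -- trace M 0 ≤ 1
  have hsum2 : M 0 + M 1 = 1 := by simpa [Fin.sum_univ_two] using hsum
  have htr1 : (M 0).trace.re ≤ 1 := by
    have h2 : (M 0).trace + (M 1).trace = 2 := by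
      rw [← trace_add, hsum2, trace_one]; simp
    have h2re := congrArg Complex.re h2
    simp [Complex.add_re] at h2re
    linarith
  have honem : (0:ℂ) ≤ 1 - sw - sw' := by
    have : 1 - sw - sw' = ((1 - (M 0).trace.re : ℝ) : ℂ) := by
      rw [show (1:ℂ) - sw - sw' = 1 - (sw + sw') by ring, hswsum, htrM0re, htrM0]
      push_cast; ring
    rw [this, show (0:ℂ) = ((0:ℝ):ℂ) by norm_num]
    exact Complex.real_le_real.mpr (by linarith)
  -- the decomposition
  have hpsd00 : (vecMulVec w (star w)).PosSemidef := outer_psd w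
  have hpsd01 : (vecMulVec w' (star w')).PosSemidef := outer_psd w'
  have hpsd10 : (sw • (1 : Matrix (Fin 2) (Fin 2) ℂ) - vecMulVec w (star w)).PosSemidef := by
    refine posSemidef_iff_dotProduct_mulVec.mpr ⟨?_, ?_⟩
    · show (sw • (1 : Matrix (Fin 2) (Fin 2) ℂ) - vecMulVec w (star w))ᴴ = _
      rw [conjTranspose_sub, conjTranspose_smul, conjTranspose_one, hsws, (outer_psd w).1]
    · intro u
      rw [sub_mulVec, dotProduct_sub, smul_mulVec, one_mulVec, dotProduct_smul,
        smul_eq_mul, vmv_mulVec, dotProduct_smul, smul_eq_mul, sub_nonneg]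
      calc (star w ⬝ᵥ u) * (star u ⬝ᵥ w) = (star u ⬝ᵥ w) * (star w ⬝ᵥ u) := by ring
        _ ≤ (star u ⬝ᵥ u) * (star w ⬝ᵥ w) := cs u w
        _ = sw * (star u ⬝ᵥ u) := by rw [← hswdef]; ring
  have hpsd11 : ((1 - sw) • (1 : Matrix (Fin 2) (Fin 2) ℂ) - vecMulVec w' (star w')).PosSemidef := by
    refine posSemidef_iff_dotProduct_mulVec.mpr ⟨?_, ?_⟩
    · show ((1 - sw) • (1 : Matrix (Fin 2) (Fin 2) ℂ) - vecMulVec w' (star w'))ᴴ = _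
      rw [conjTranspose_sub, conjTranspose_smul, conjTranspose_one, (outer_psd w').1]
      congr 1
      simp [hsws]
    · intro u
      rw [sub_mulVec, dotProduct_sub, smul_mulVec, one_mulVec, dotProduct_smul,
        smul_eq_mul, vmv_mulVec, dotProduct_smul, smul_eq_mul, sub_nonneg]
      calc (star w' ⬝ᵥ u) * (star u ⬝ᵥ w') = (star u ⬝ᵥ w') * (star w' ⬝ᵥ u) := by ring
        _ ≤ (star u ⬝ᵥ u) * (star w' ⬝ᵥ w') := cs u w'
        _ ≤ (star u ⬝ᵥ u) * (star w' ⬝ᵥ w') + (1 - sw - sw') * (star u ⬝ᵥ u) :=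
            le_add_of_nonneg_right (mul_nonneg honem (dot_self_nonneg u))
        _ = (1 - sw) * (star u ⬝ᵥ u) := by rw [← hsw'def]; ring
  have hobj0 : star φ ⬝ᵥ (vecMulVec w (star w) *ᵥ φ) = z * star z := by
    rw [vmv_mulVec, dotProduct_smul, smul_eq_mul, star_dotProduct w φ, ← hz]
    ring
  have hobj1 : star φ ⬝ᵥ (((1 - sw) • (1 : Matrix (Fin 2) (Fin 2) ℂ)
      - vecMulVec w' (star w')) *ᵥ φ) = (1 - sw) - x * star x := by
    rw [sub_mulVec, dotProduct_sub, smul_mulVec, one_mulVec, dotProduct_smul,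
      smul_eq_mul, hφ, mul_one, vmv_mulVec, dotProduct_smul, smul_eq_mul,
      star_dotProduct w' φ, ← hx]
    ring
  refine ⟨![![vecMulVec w (star w), vecMulVec w' (star w')],
           ![sw • 1 - vecMulVec w (star w), (1 - sw) • 1 - vecMulVec w' (star w')]],
    ⟨?_, ?_, ?_⟩, ?_⟩
  · intro a j
    fin_cases a <;> fin_cases j
    · exact hpsd00
    · exact hpsd01
    · exact hpsd10
    · exact hpsd11
  · intro j
    fin_cases j
    · rw [Fin.sum_univ_two, Fin.sum_univ_two]
      show ((2:ℕ):ℂ) • (vecMulVec w (star w) + (sw • 1 - vecMulVec w (star w)))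
        = ((vecMulVec w (star w)).trace + (sw • (1 : Matrix (Fin 2) (Fin 2) ℂ)
            - vecMulVec w (star w)).trace) • 1
      rw [show vecMulVec w (star w) + (sw • 1 - vecMulVec w (star w))
            = sw • (1 : Matrix (Fin 2) (Fin 2) ℂ) from by abel,
        trace_sub, trace_smul, vmv_trace, trace_one, ← hswdef, smul_smul]
      simp only [Fintype.card_fin, Nat.cast_ofNat, smul_eq_mul]
      congr 1
      ring
    · rw [Fin.sum_univ_two, Fin.sum_univ_two]
      show ((2:ℕ):ℂ) • (vecMulVec w' (star w') + ((1 - sw) • 1 - vecMulVec w' (star w')))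
        = ((vecMulVec w' (star w')).trace + ((1 - sw) • (1 : Matrix (Fin 2) (Fin 2) ℂ)
            - vecMulVec w' (star w')).trace) • 1
      rw [show vecMulVec w' (star w') + ((1 - sw) • 1 - vecMulVec w' (star w'))
            = (1 - sw) • (1 : Matrix (Fin 2) (Fin 2) ℂ) from by abel,
        trace_sub, trace_smul, vmv_trace, trace_one, ← hsw'def, smul_smul]
      simp only [Fintype.card_fin, Nat.cast_ofNat, smul_eq_mul]
      congr 1
      ring
  · intro a
    fin_cases a
    · rw [Fin.sum_univ_two]
      show vecMulVec w (star w) + vecMulVec w' (star w') = M 0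
      exact hMsum
    · rw [Fin.sum_univ_two]
      show (sw • 1 - vecMulVec w (star w)) + ((1 - sw) • 1 - vecMulVec w' (star w')) = M 1
      have h1M : M 1 = 1 - M 0 := eq_sub_of_add_eq' hsum2
      rw [h1M, ← hMsum, sub_smul, one_smul]
      abel
  · unfold objective
    rw [Fin.sum_univ_two]
    show _ ≤ (star φ ⬝ᵥ (vecMulVec w (star w) *ᵥ φ)).re +
      (star φ ⬝ᵥ (((1 - sw) • (1 : Matrix (Fin 2) (Fin 2) ℂ) - vecMulVec w' (star w')) *ᵥ φ)).re
    rw [hobj0, hobj1, hzz, hxx, hswre, htrM0re, htrAre]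
    simp only [Complex.sub_re, Complex.one_re, Complex.ofReal_re]
    nlinarith [sq_nonneg (sR - s'R)]
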